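/- Let α ∈ [1,2]. There exists a continuous function f : [0,1] → [0,∞) with f(δ) → 0 as δ → 0⁺ such that for every δ ∈ (0,1) and all ζ₁ = (ξ₁,μ₁), ζ₂ = (ξ₂,μ₂) ∈ A_δ satisfying ξ₁ξ₂ < 0 and μ₁μ₂ < 0, one has h(ζ₁+ζ₂) ≤ |h(ζ₁) − h(ζ₂)| + f(δ) · max(h(ζ₁), h(ζ₂)). -/

import Mathlib

open Set

noncomputable section

def hBOZK (α : ℝ) (ζ : ℝ × ℝ) : ℝ := (α + 1) * |ζ.1| ^ α + ζ.2 ^ 2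

/-- `A_δ = {(ξ,μ) : (B-δ)|ξ|^α ≤ μ² ≤ (B+δ)|ξ|^α}` with `B = α(α+1)/2`. -/
def ASet (α δ : ℝ) : Set (ℝ × ℝ) :=
  {ζ | (α * (α + 1) / 2 - δ) * |ζ.1| ^ α ≤ ζ.2 ^ 2 ∧
       ζ.2 ^ 2 ≤ (α * (α + 1) / 2 + δ) * |ζ.1| ^ α}

lemma superadd_rpow {x y p : ℝ} (hx : 0 ≤ x) (hy : 0 ≤ y) (hp : 1 ≤ p) :
    x ^ p + y ^ p ≤ (x + y) ^ p := by
  have hp0 : (0:ℝ) ≤ p - 1 := by linarith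
  have hxy : 0 ≤ x + y := by linarith
  have hx' : x ^ p = x * x ^ (p - 1) := by
    have h := Real.rpow_add' hx (show (1:ℝ) + (p - 1) ≠ 0 by intro h; linarith)
    rw [show (1:ℝ) + (p - 1) = p by ring, Real.rpow_one] at h
    exact h
  have hy' : y ^ p = y * y ^ (p - 1) := by
    have h := Real.rpow_add' hy (show (1:ℝ) + (p - 1) ≠ 0 by intro h; linarith)
    rw [show (1:ℝ) + (p - 1) = p by ring, Real.rpow_one] at h
    exact h
  have hxy' : (x + y) ^ p = (x + y) * (x + y) ^ (p - 1) := by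
    have h := Real.rpow_add' hxy (show (1:ℝ) + (p - 1) ≠ 0 by intro h; linarith)
    rw [show (1:ℝ) + (p - 1) = p by ring, Real.rpow_one] at h
    exact h
  have h1 : x ^ (p - 1) ≤ (x + y) ^ (p - 1) :=
    Real.rpow_le_rpow hx (by linarith) hp0
  have h2 : y ^ (p - 1) ≤ (x + y) ^ (p - 1) :=
    Real.rpow_le_rpow hy (by linarith) hp0
  have h3 : x * x ^ (p - 1) ≤ x * (x + y) ^ (p - 1) := mul_le_mul_of_nonneg_left h1 hx
  have h4 : y * y ^ (p - 1) ≤ y * (x + y) ^ (p - 1) := mul_le_mul_of_nonneg_left h2 hy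
  rw [hx', hy', hxy']
  nlinarith

/-- Purely algebraic core estimate. -/
lemma coreBOZK (α δ B u v μ₁ μ₂ X D M : ℝ)
    (hα1 : 1 ≤ α) (hδ0 : 0 < δ) (hδ1 : δ < 1) (hB1 : 1 ≤ B)
    (hu0 : 0 < u) (hv0 : 0 < v) (hvu : v ≤ u)
    (m1l : (B - δ) * u ^ 2 ≤ μ₁ ^ 2) (m1r : μ₁ ^ 2 ≤ (B + δ) * u ^ 2)
    (m2l : (B - δ) * v ^ 2 ≤ μ₂ ^ 2) (m2r : μ₂ ^ 2 ≤ (B + δ) * v ^ 2)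
    (hX : X ≤ u ^ 2 - v ^ 2)
    (hprod : μ₁ * μ₂ = -|μ₁ * μ₂|)
    (hD : (α + 1) * u ^ 2 + μ₁ ^ 2 - ((α + 1) * v ^ 2 + μ₂ ^ 2) ≤ D)
    (hM : (α + 1) * u ^ 2 + μ₁ ^ 2 ≤ M) :
    (α + 1) * X + (μ₁ + μ₂) ^ 2 ≤ D + 3 * δ * M := by
  have hBδ : (0:ℝ) ≤ B - δ := by linarith
  -- lower bound on |μ₁ μ₂|
  have hsq : ((B - δ) * (u * v)) ^ 2 ≤ |μ₁ * μ₂| ^ 2 := by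
    rw [sq_abs]
    have h := mul_le_mul m1l m2l (mul_nonneg hBδ (sq_nonneg v)) (sq_nonneg μ₁)
    nlinarith [h]
  have h2 : (0:ℝ) ≤ (B - δ) * (u * v) := mul_nonneg hBδ (mul_nonneg hu0.le hv0.le)
  have hprodlb : (B - δ) * (u * v) ≤ |μ₁ * μ₂| :=
    calc (B - δ) * (u * v) = Real.sqrt (((B - δ) * (u * v)) ^ 2) := (Real.sqrt_sq h2).symm
      _ ≤ Real.sqrt (|μ₁ * μ₂| ^ 2) := Real.sqrt_le_sqrt hsq
      _ = |μ₁ * μ₂| := Real.sqrt_sq (abs_nonneg _)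
  have hsum : (μ₁ + μ₂) ^ 2 ≤ (B + δ) * (u ^ 2 + v ^ 2) - 2 * ((B - δ) * (u * v)) := by
    have e' : (μ₁ + μ₂) ^ 2 = μ₁ ^ 2 + μ₂ ^ 2 + 2 * (μ₁ * μ₂) := by ring
    linarith [e', hprod, m1r, m2r, hprodlb]
  have hstepB : (B + δ) * (u ^ 2 + v ^ 2) - 2 * ((B - δ) * (u * v)) ≤
      B * (u ^ 2 - v ^ 2) + 2 * δ * (u ^ 2 + v ^ 2) := by
    nlinarith [mul_nonneg (mul_nonneg (by linarith : (0:ℝ) ≤ B) hv0.le)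
      (sub_nonneg.2 hvu), mul_nonneg hδ0.le (sq_nonneg (u - v))]
  have hv2u2 : v ^ 2 ≤ u ^ 2 := by nlinarith
  have hmaxlb : u ^ 2 + v ^ 2 ≤ (α + 1) * u ^ 2 + μ₁ ^ 2 := by nlinarith [sq_nonneg u]
  have h3δ : (0:ℝ) ≤ 3 * δ := by linarith
  have hmax3 : 3 * δ * (u ^ 2 + v ^ 2) ≤ 3 * δ * M :=
    mul_le_mul_of_nonneg_left (hmaxlb.trans hM) h3δ
  have hkey1' : (α + 1) * X ≤ (α + 1) * (u ^ 2 - v ^ 2) :=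
    mul_le_mul_of_nonneg_left hX (by linarith)
  linarith

lemma keyBOZK (α δ : ℝ) (hα : α ∈ Icc (1:ℝ) 2) (hδ : δ ∈ Ioo (0:ℝ) 1)
    (ζ₁ ζ₂ : ℝ × ℝ) (m1 : ζ₁ ∈ ASet α δ) (m2 : ζ₂ ∈ ASet α δ)
    (hξ : ζ₁.1 * ζ₂.1 < 0) (hμ : ζ₁.2 * ζ₂.2 < 0) (hba : |ζ₂.1| ≤ |ζ₁.1|) :
    hBOZK α (ζ₁ + ζ₂) ≤ |hBOZK α ζ₁ - hBOZK α ζ₂|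
      + (3 * δ) * max (hBOZK α ζ₁) (hBOZK α ζ₂) := by
  obtain ⟨ξ₁, μ₁⟩ := ζ₁
  obtain ⟨ξ₂, μ₂⟩ := ζ₂
  simp only [ASet, mem_setOf_eq] at m1 m2
  simp only at hξ hμ hba ⊢
  obtain ⟨hα1, hα2⟩ := hα
  obtain ⟨hδ0, hδ1⟩ := hδ
  have hξ1 : ξ₁ ≠ 0 := fun h => by simp [h] at hξ
  have hξ2 : ξ₂ ≠ 0 := fun h => by simp [h] at hξ
  have ha : 0 < |ξ₁| := abs_pos.mpr hξ1
  have hb : 0 < |ξ₂| := abs_pos.mpr hξ2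
  have habs : |ξ₁ + ξ₂| = |ξ₁| - |ξ₂| := by
    rcases mul_neg_iff.mp hξ with ⟨h1, h2⟩ | ⟨h1, h2⟩
    · have e1 := abs_of_pos h1
      have e2 := abs_of_neg h2
      rw [abs_of_nonneg (by rw [e1, e2] at hba; linarith), e1, e2]; ring
    · have e1 := abs_of_neg h1
      have e2 := abs_of_pos h2
      rw [abs_of_nonpos (by rw [e1, e2] at hba; linarith), e1, e2]; ring
  obtain ⟨u, hu_def⟩ : ∃ u : ℝ, u = |ξ₁| ^ (α / 2) := ⟨_, rfl⟩
  obtain ⟨v, hv_def⟩ : ∃ v : ℝ, v = |ξ₂| ^ (α / 2) := ⟨_, rfl⟩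
  have hu0 : 0 < u := hu_def ▸ Real.rpow_pos_of_pos ha _
  have hv0 : 0 < v := hv_def ▸ Real.rpow_pos_of_pos hb _
  have hvu : v ≤ u := by rw [hu_def, hv_def]; exact Real.rpow_le_rpow hb.le hba (by linarith)
  have hu2 : |ξ₁| ^ α = u ^ 2 := by
    rw [hu_def, show (|ξ₁| ^ (α / 2)) ^ 2 = (|ξ₁| ^ (α / 2)) ^ ((2:ℕ):ℝ) from
      (Real.rpow_natCast _ 2).symm, ← Real.rpow_mul (abs_nonneg _)]
    norm_num
  have hv2 : |ξ₂| ^ α = v ^ 2 := by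
    rw [hv_def, show (|ξ₂| ^ (α / 2)) ^ 2 = (|ξ₂| ^ (α / 2)) ^ ((2:ℕ):ℝ) from
      (Real.rpow_natCast _ 2).symm, ← Real.rpow_mul (abs_nonneg _)]
    norm_num
  have hB1 : (1:ℝ) ≤ α * (α + 1) / 2 := by nlinarith
  have key1 : (|ξ₁| - |ξ₂|) ^ α ≤ u ^ 2 - v ^ 2 := by
    have h := superadd_rpow (x := |ξ₁| - |ξ₂|) (y := |ξ₂|) (by linarith) hb.le hα1
    rw [show |ξ₁| - |ξ₂| + |ξ₂| = |ξ₁| by ring, hu2, hv2] at h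
    linarith
  have hprod : μ₁ * μ₂ = -|μ₁ * μ₂| := by rw [abs_of_neg hμ]; ring
  simp only [hBOZK, Prod.fst_add, Prod.snd_add]
  simp only [habs, hu2, hv2]
  exact coreBOZK α δ (α * (α + 1) / 2) u v μ₁ μ₂ ((|ξ₁| - |ξ₂|) ^ α) _ _
    hα1 hδ0 hδ1 hB1 hu0 hv0 hvu
    (hu2 ▸ m1.1) (hu2 ▸ m1.2) (hv2 ▸ m2.1) (hv2 ▸ m2.2) key1 hprod
    (le_abs_self _) (le_max_left _ _)

theorem stmt12 (α : ℝ) (hα : α ∈ Icc (1:ℝ) 2) :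
    ∃ f : ℝ → ℝ, ContinuousOn f (Icc 0 1) ∧ (∀ δ ∈ Icc (0:ℝ) 1, 0 ≤ f δ) ∧
      Filter.Tendsto f (nhdsWithin 0 (Ioi 0)) (nhds 0) ∧
      ∀ δ ∈ Ioo (0:ℝ) 1, ∀ ζ₁ ζ₂ : ℝ × ℝ, ζ₁ ∈ ASet α δ → ζ₂ ∈ ASet α δ →
        ζ₁.1 * ζ₂.1 < 0 → ζ₁.2 * ζ₂.2 < 0 →
        hBOZK α (ζ₁ + ζ₂) ≤ |hBOZK α ζ₁ - hBOZK α ζ₂|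
          + f δ * max (hBOZK α ζ₁) (hBOZK α ζ₂) := by
  refine ⟨fun δ => 3 * δ, (continuous_const.mul continuous_id).continuousOn,
    fun δ hδ => mul_nonneg (by norm_num) hδ.1, ?_, ?_⟩
  · have h : Filter.Tendsto (fun δ : ℝ => 3 * δ) (nhds 0) (nhds 0) := by
      exact (continuous_const.mul continuous_id : Continuous (fun δ : ℝ => 3 * δ)).tendsto' (0:ℝ) 0 (by norm_num)
    exact h.mono_left nhdsWithin_le_nhds
  · intro δ hδ ζ₁ ζ₂ m1 m2 hξ hμ
    rcases le_total |ζ₂.1| |ζ₁.1| with h | h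
    · exact keyBOZK α δ hα hδ ζ₁ ζ₂ m1 m2 hξ hμ h
    · rw [add_comm ζ₁ ζ₂, abs_sub_comm, max_comm]
      exact keyBOZK α δ hα hδ ζ₂ ζ₁ m2 m1 (by rw [mul_comm]; exact hξ)
        (by rw [mul_comm]; exact hμ) h
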